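/- Let C be the collection consisting of the languages ℤ \ {i} for all i ∈ ℤ, over the universe ℤ. Then no generating algorithm achieves a Pareto-optimal sequence of non-uniform generation times for C: for every algorithm G that non-uniformly generates from C with generation times t_G(L) (L ∈ C), there exists another algorithm G' that non-uniformly generates from C with t_{G'}(L_i) < t_G(L_i) for some language L_i ∈ C and t_{G'}(L_j) ≤ t_G(L_j) for every other language L_j ∈ C. -/

import Mathlib

/-- The input prefix `x_1, ..., x_t` presented to the algorithm at time `t`
(universe `ℤ`). -/
def inputListZ (x : ℕ → ℤ) (t : ℕ) : List ℤ := (List.range t).map x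

/-- `S_t`: the set of distinct strings among the first `t` inputs. -/
def SfinZ (x : ℕ → ℤ) (t : ℕ) : Finset ℤ := (inputListZ x t).toFinset

/-- `x` is an enumeration of the language `Lang ⊆ ℤ`. -/
def IsEnumOfZ (x : ℕ → ℤ) (Lang : Set ℤ) : Prop :=
  (∀ t, x t ∈ Lang) ∧ ∀ s ∈ Lang, ∃ t, x t = s

/-- Non-uniform generation from a collection of languages over `ℤ` indexed by `ℤ`. -/
def NonUniformGenZ (G : List ℤ → ℤ) (L : ℤ → Set ℤ) (tG : ℤ → ℕ) : Prop :=
  ∀ i (x : ℕ → ℤ), IsEnumOfZ x (L i) → ∀ t, 1 ≤ t → tG i ≤ (SfinZ x t).card →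
    G (inputListZ x t) ∈ L i \ ↑(SfinZ x t)

/-- Proposition 3.7. For the collection `C = {ℤ \ {i}}_{i ∈ ℤ}`, no
algorithm achieves Pareto-optimal non-uniform generation times: every algorithm `G`
non-uniformly generating from `C` is strictly Pareto-dominated by another algorithm
`G'` non-uniformly generating from `C`. -/
lemma L1 (G : List ℤ → ℤ) (tG : ℤ → ℕ)
    (hG : NonUniformGenZ G (fun i => ({i}ᶜ : Set ℤ)) tG)
    (l : List ℤ) (hl : l ≠ []) (j : ℤ) (hj : j ∉ l.toFinset)
    (hle : tG j ≤ l.toFinset.card) :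
    G l ≠ j ∧ G l ∉ l.toFinset := by
  classical
  set e : ℕ → ℤ := fun k => if Denumerable.ofNat ℤ k = j then j + 1 else Denumerable.ofNat ℤ k with he
  set x : ℕ → ℤ := fun k => if h : k < l.length then l.get ⟨k, h⟩ else e (k - l.length) with hx
  have henum : IsEnumOfZ x ({j}ᶜ : Set ℤ) := by
    constructor
    · intro t
      simp only [hx]
      split
      · next h =>
        simp only [Set.mem_compl_iff, Set.mem_singleton_iff]
        intro hc
        exact hj (by rw [← hc]; exact List.mem_toFinset.2 (List.get_mem l ⟨t, h⟩))
      · simp only [he, Set.mem_compl_iff, Set.mem_singleton_iff]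
        split
        · exact by omega
        · assumption
    · intro s hs
      refine ⟨l.length + Encodable.encode s, ?_⟩
      simp only [hx]
      rw [dif_neg (by omega)]
      have : l.length + Encodable.encode s - l.length = Encodable.encode s := by omega
      rw [this]
      simp only [he, Denumerable.ofNat_encode]
      rw [if_neg (by simpa [Set.mem_compl_iff] using hs)]
  have hinp : inputListZ x l.length = l := by
    apply List.ext_get
    · simp [inputListZ]
    · intro n h1 h2
      simp only [inputListZ, List.get_eq_getElem, List.getElem_map, List.getElem_range, hx]
      rw [dif_pos h2]
  have hlen : 1 ≤ l.length := by
    cases l with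
    | nil => exact absurd rfl hl
    | cons a t => simp
  have := hG j x henum l.length hlen (by rw [SfinZ, hinp]; exact hle)
  rw [hinp] at this
  simp only [SfinZ, hinp] at this
  obtain ⟨h1, h2⟩ := this
  exact ⟨by simpa using h1, by simpa using h2⟩


theorem stmt_7 (G : List ℤ → ℤ) (tG : ℤ → ℕ)
    (hG : NonUniformGenZ G (fun i => ({i}ᶜ : Set ℤ)) tG) :
    ∃ (G' : List ℤ → ℤ) (tG' : ℤ → ℕ),
      NonUniformGenZ G' (fun i => ({i}ᶜ : Set ℤ)) tG' ∧
        (∃ i, tG' i < tG i) ∧ ∀ j, tG' j ≤ tG j := by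
  classical
  -- first: there is some i₀ with tG i₀ ≥ 1
  have hex : ∃ i, 1 ≤ tG i := by
    by_contra h
    push_neg at h
    have z0 : G [(0:ℤ)] ≠ (if G [(0:ℤ)] = 0 then 1 else G [(0:ℤ)]) ∧
        G [(0:ℤ)] ∉ ([(0:ℤ)]).toFinset := by
      apply L1 G tG hG [(0:ℤ)] (by simp)
      · simp only [List.toFinset_cons, List.toFinset_nil]
        split
        · next hc => simp
        · next hc => simpa using hc
      · have := h (if G [(0:ℤ)] = 0 then 1 else G [(0:ℤ)])
        simp only [List.toFinset_cons, List.toFinset_nil]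
        omega
    obtain ⟨h1, h2⟩ := z0
    by_cases hz : G [(0:ℤ)] = 0
    · exact h2 (by simp [hz])
    · rw [if_neg hz] at h1; exact h1 rfl
  obtain ⟨i₀, hi₀⟩ := hex
  set n := tG i₀ with hn
  set m := n - 1 with hm
  -- fresh element
  let w : List ℤ → ℤ := fun l => (insert i₀ l.toFinset).max' (Finset.insert_nonempty _ _) + 1
  have hw : ∀ l : List ℤ, w l ∉ l.toFinset ∧ w l ≠ i₀ := by
    intro l
    constructor
    · intro hc
      have := Finset.le_max' (insert i₀ l.toFinset) _ (Finset.mem_insert_of_mem hc)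
      simp only [w] at this ⊢
      omega
    · intro hc
      have := Finset.le_max' (insert i₀ l.toFinset) i₀ (Finset.mem_insert_self _ _)
      simp only [w] at hc
      omega
  refine ⟨fun l => if l.toFinset.card = m ∧ i₀ ∉ l.toFinset then G (l ++ [w l]) else G l,
    fun j => if j = i₀ then m else tG j, ?_, ⟨i₀, by dsimp only; rw [if_pos rfl]; omega⟩,
    fun j => ?_⟩
  swap
  · dsimp only
    split
    · next h => rw [h]; omega
    · omega
  intro j x henum t ht hcard
  have hjS : j ∉ SfinZ x t := by
    intro hc
    simp only [SfinZ, inputListZ, List.mem_toFinset, List.mem_map] at hc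
    obtain ⟨k, _, hk⟩ := hc
    have := henum.1 k
    rw [hk] at this
    simp at this
  have hSsub : ∀ a ∈ SfinZ x t, a ≠ j := fun a ha hc => hjS (hc ▸ ha)
  have hfin : (inputListZ x t).toFinset = SfinZ x t := rfl
  have hne : inputListZ x t ≠ [] := by
    simp only [inputListZ]
    intro hc
    have : t = 0 := by simpa using congrArg List.length hc
    omega
  by_cases hcond : (inputListZ x t).toFinset.card = m ∧ i₀ ∉ (inputListZ x t).toFinset
  · -- padded case
    beta_reduce
    rw [if_pos hcond]
    obtain ⟨hc1, hc2⟩ := hcond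
    set l := inputListZ x t with hl
    set l2 := l ++ [w l] with hl2
    have hwl := hw l
    have hl2fin : l2.toFinset = insert (w l) l.toFinset := by
      ext a; simp [hl2, or_comm]
    have hl2card : l2.toFinset.card = m + 1 := by
      rw [hl2fin, Finset.card_insert_of_notMem hwl.1, hc1]
    have hl2ne : l2 ≠ [] := by simp [hl2]
    have hi₀l2 : i₀ ∉ l2.toFinset := by
      rw [hl2fin]
      simp only [Finset.mem_insert]
      rintro (hc | hc)
      · exact hwl.2 hc.symm
      · exact hc2 hc
    have hn1 : n = m + 1 := by omega
    -- main fact with j' = i₀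
    have key0 : G l2 ≠ i₀ ∧ G l2 ∉ l2.toFinset :=
      L1 G tG hG l2 hl2ne i₀ hi₀l2 (by rw [hl2card, ← hn1])
    have hGnotS : G l2 ∉ (SfinZ x t) := by
      intro hc
      exact key0.2 (by rw [hl2fin]; exact Finset.mem_insert_of_mem hc)
    have hGnej : G l2 ≠ j := by
      by_cases hji : j = i₀
      · rw [hji]; exact key0.1
      by_cases hjw : j = w l
      · intro hc
        apply key0.2
        rw [hl2fin, hc, hjw]
        exact Finset.mem_insert_self _ _
      · have hjl2 : j ∉ l2.toFinset := by
          rw [hl2fin]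
          simp only [Finset.mem_insert]
          rintro (hc | hc)
          · exact hjw hc
          · exact hjS hc
        have hle : tG j ≤ l2.toFinset.card := by
          have : (if j = i₀ then m else tG j) ≤ (SfinZ x t).card := hcard
          rw [if_neg hji] at this
          have hcS : (SfinZ x t).card = m := hc1
          rw [hl2card]
          omega
        exact (L1 G tG hG l2 hl2ne j hjl2 hle).1
    exact ⟨hGnej, hGnotS⟩
  · -- unpadded case: G' = G here
    beta_reduce
    rw [if_neg hcond]
    have htGj : tG j ≤ (SfinZ x t).card := by
      by_cases hji : j = i₀
      · have h1 : m ≤ (SfinZ x t).card := by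
          have h0 : (if j = i₀ then m else tG j) ≤ (SfinZ x t).card := hcard
          rwa [if_pos hji] at h0
        have h3 : (SfinZ x t).card ≠ m := fun hc => hcond ⟨hc, hji ▸ hjS⟩
        have h4 : tG j = n := by rw [hji]
        omega
      · have : (if j = i₀ then m else tG j) ≤ (SfinZ x t).card := hcard
        rwa [if_neg hji] at this
    exact hG j x henum t ht htGj
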